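/- Let Ω ⊂ ℝᴺ have finite positive measure and satisfy the Poincaré inequality ‖f - f̄‖₂ ≤ C_P‖∇f‖₂ for f ∈ H¹(Ω). Let 0 < C₀ ≤ C₁ and, for each l ≥ 1/2, let Φ_l : ℝ → ℝ be continuous with (C₀|y|)^l ≤ |Φ_l(y)| ≤ (C₁|y|)^l and y·Φ_l(y) > 0 for y ≠ 0. Then there exists C_P* > 0, depending only on Ω, C₀, C₁ (and not on l), such that ‖Φ_l(ξ)‖₂ ≤ C_P*‖∇Φ_l(ξ)‖₂ for every l ≥ 1/2 and every ξ ∈ L¹(Ω) with zero mean and Φ_l(ξ) ∈ H¹(Ω). -/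

import Mathlib

open Real Set MeasureTheory

noncomputable def lpNormOn {N : ℕ} (Ω : Set (EuclideanSpace ℝ (Fin N))) (p : ℝ)
    (f : EuclideanSpace ℝ (Fin N) → ℝ) : ℝ :=
  (∫ x in Ω, |f x| ^ p) ^ (1 / p)

noncomputable def gradNormOn {N : ℕ} (Ω : Set (EuclideanSpace ℝ (Fin N)))
    (f : EuclideanSpace ℝ (Fin N) → ℝ) : ℝ :=
  (∫ x in Ω, ‖fderiv ℝ f x‖ ^ (2:ℝ)) ^ ((1:ℝ) / 2)

noncomputable def meanOn {N : ℕ} (Ω : Set (EuclideanSpace ℝ (Fin N)))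
    (f : EuclideanSpace ℝ (Fin N) → ℝ) : ℝ :=
  (∫ x in Ω, f x) / (volume Ω).toReal

/-- Membership in (our model of) `H¹(Ω)`. -/
def MemH1On {N : ℕ} (Ω : Set (EuclideanSpace ℝ (Fin N)))
    (f : EuclideanSpace ℝ (Fin N) → ℝ) : Prop :=
  Differentiable ℝ f ∧ IntegrableOn f Ω volume ∧
    IntegrableOn (fun x => (f x) ^ (2:ℝ)) Ω volume ∧
    IntegrableOn (fun x => ‖fderiv ℝ f x‖ ^ (2:ℝ)) Ω volume

set_option maxHeartbeats 1000000

lemma nlp_aux {α : Type*} [MeasurableSpace α] (ν : Measure α) [IsFiniteMeasure ν]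
    (C₀ C₁ l m : ℝ) (hC₀ : 0 < C₀) (hC₁ : 0 < C₁) (hl : 1/2 ≤ l) (hm : 0 < m)
    (u ξ : α → ℝ) (hu : Measurable u)
    (hu1 : Integrable u ν) (hu2 : Integrable (fun x => u x ^ 2) ν)
    (hξ : Integrable ξ ν) (hξ0 : ∫ x, ξ x ∂ν = 0)
    (hsign : ∀ x, 0 ≤ ξ x * u x)
    (hw1 : ∀ x, C₀ * |ξ x| ≤ |u x| ^ (1/l : ℝ))
    (hw2 : ∀ x, |u x| ^ (1/l : ℝ) ≤ C₁ * |ξ x|) :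
    m ^ 2 * (ν Set.univ).toReal ≤ (8 * (C₁ / C₀) + 4) * ∫ x, (u x - m) ^ 2 ∂ν := by
  have hl0 : 0 < l := lt_of_lt_of_le (by norm_num) hl
  have hil : (0:ℝ) ≤ 1/l := by positivity
  have hil2 : (1:ℝ)/l ≤ 2 := by rw [div_le_iff₀ hl0]; linarith
  set w : α → ℝ := fun x => |u x| ^ (1/l : ℝ) with hwdef
  have hwnn : ∀ x, 0 ≤ w x := fun x => rpow_nonneg (abs_nonneg _) _
  have hwmeas : Measurable w := (hu.abs.pow_const _)
  have hwint : Integrable w ν := by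
    refine (hξ.const_mul C₁).mono hwmeas.aestronglyMeasurable
      (Filter.Eventually.of_forall fun x => ?_)
    rw [Real.norm_eq_abs, Real.norm_eq_abs, abs_of_nonneg (hwnn x), abs_mul,
      abs_of_pos hC₁]
    exact hw2 x
  -- zero set fact
  have hzero : ∀ x, u x = 0 → ξ x = 0 := by
    intro x hx
    have h := hw1 x
    rw [hx] at h
    simp only [abs_zero] at h
    rw [Real.zero_rpow (by positivity : (1:ℝ)/l ≠ 0)] at h
    have : |ξ x| ≤ 0 := by nlinarith [abs_nonneg (ξ x)]
    simpa [abs_nonpos_iff] using this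
  set P : Set α := {x | 0 < u x} with hPdef
  set Nn : Set α := {x | u x < 0} with hNdef
  have hPm : MeasurableSet P := measurableSet_lt measurable_const hu
  have hNm : MeasurableSet Nn := measurableSet_lt hu measurable_const
  have hPξ : ∀ x ∈ P, 0 < ξ x := by
    intro x hx
    have hxu : 0 < u x := hx
    have hne : ξ x ≠ 0 := by
      intro h0
      have := hzero x
      have hwx : w x ≤ 0 := by
        have h := hw2 x; rw [h0, abs_zero, mul_zero] at h; exact h
      have : (0:ℝ) < w x := Real.rpow_pos_of_pos (abs_pos.2 (ne_of_gt hxu)) _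
      linarith [hwx]
    rcases hne.lt_or_gt with h | h
    · exfalso; nlinarith [hsign x]
    · exact h
  have hNξ : ∀ x ∈ Nn, ξ x < 0 := by
    intro x hx
    have hxu : u x < 0 := hx
    have hne : ξ x ≠ 0 := by
      intro h0
      have hwx : w x ≤ 0 := by
        have h := hw2 x; rw [h0, abs_zero, mul_zero] at h; exact h
      have : (0:ℝ) < w x := Real.rpow_pos_of_pos (abs_pos.2 (ne_of_lt hxu)) _
      linarith
    rcases hne.lt_or_gt with h | h
    · exact h
    · exfalso; nlinarith [hsign x]
  -- zero mean split
  have hPN : ∫ x in P, ξ x ∂ν = ∫ x in Nn, (-ξ x) ∂ν := by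
    have hU : MeasurableSet (P ∪ Nn) := hPm.union hNm
    have hdisj : Disjoint P Nn := by
      rw [Set.disjoint_left]; intro x hx hx'
      simp only [hPdef, hNdef, Set.mem_setOf_eq] at hx hx'
      linarith
    have hcompl : (P ∪ Nn)ᶜ = {x | u x = 0} := by
      ext x
      simp only [Set.mem_compl_iff, Set.mem_union, hPdef, hNdef, Set.mem_setOf_eq,
        not_or, not_lt]
      constructor
      · rintro ⟨h1, h2⟩; linarith
      · intro h; constructor <;> simp [h]
    have hzint : ∫ x in (P ∪ Nn)ᶜ, ξ x ∂ν = 0 := by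
      rw [hcompl]
      apply setIntegral_eq_zero_of_forall_eq_zero
      intro x hx
      exact hzero x hx
    have hsplit := integral_add_compl hU hξ
    rw [hξ0, hzint, add_zero] at hsplit
    rw [setIntegral_union hdisj hNm hξ.integrableOn hξ.integrableOn] at hsplit
    rw [integral_neg]
    linarith
  -- chain ∫_P w ≤ (C₁/C₀) ∫_N w
  have h1 : ∫ x in P, w x ∂ν ≤ C₁ * ∫ x in P, ξ x ∂ν := by
    rw [← integral_const_mul]
    refine setIntegral_mono_on hwint.integrableOn ((hξ.const_mul C₁).integrableOn) hPm ?_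
    intro x hx
    calc w x ≤ C₁ * |ξ x| := hw2 x
      _ = C₁ * ξ x := by rw [abs_of_pos (hPξ x hx)]
  have h2 : ∫ x in Nn, (-ξ x) ∂ν ≤ (1/C₀) * ∫ x in Nn, w x ∂ν := by
    rw [← integral_const_mul]
    refine setIntegral_mono_on hξ.neg.integrableOn ((hwint.const_mul (1/C₀)).integrableOn) hNm ?_
    intro x hx
    have hxn : |ξ x| = -ξ x := abs_of_neg (hNξ x hx)
    have hwx : C₀ * (-ξ x) ≤ w x := by have h := hw1 x; rwa [hxn] at h
    rw [one_div, inv_mul_eq_div, le_div_iff₀ hC₀, mul_comm]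
    exact hwx
  have hPw : ∫ x in P, w x ∂ν ≤ (C₁/C₀) * ∫ x in Nn, w x ∂ν := by
    calc ∫ x in P, w x ∂ν ≤ C₁ * ∫ x in P, ξ x ∂ν := h1
      _ = C₁ * ∫ x in Nn, (-ξ x) ∂ν := by rw [hPN]
      _ ≤ C₁ * ((1/C₀) * ∫ x in Nn, w x ∂ν) := by
          exact mul_le_mul_of_nonneg_left h2 hC₁.le
      _ = (C₁/C₀) * ∫ x in Nn, w x ∂ν := by ring
  -- variance pieces
  have hvint : Integrable (fun x => (u x - m)^2) ν := by
    have heq : (fun x => (u x - m)^2) = fun x => (u x ^ 2 - (2*m) * u x) + m^2 := by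
      funext x; ring
    rw [heq]
    exact (hu2.sub (hu1.const_mul _)).add (integrable_const _)
  set D2 := ∫ x, (u x - m)^2 ∂ν with hD2def
  have hD2nn : 0 ≤ D2 := integral_nonneg fun x => sq_nonneg _
  have cheb : ∀ (S : Set α), MeasurableSet S → ∀ c : ℝ, (∀ x ∈ S, c ≤ (u x - m)^2) →
      c * (ν S).toReal ≤ D2 := by
    intro S hS c hc
    calc c * (ν S).toReal = ∫ _ in S, c ∂ν := by rw [setIntegral_const, smul_eq_mul, measureReal_def]; ring
      _ ≤ ∫ x in S, (u x - m)^2 ∂ν := by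
          refine setIntegral_mono_on ?_ hvint.integrableOn hS hc
          exact integrableOn_const (measure_ne_top ν S)
      _ ≤ D2 := setIntegral_le_integral hvint (Filter.Eventually.of_forall fun x => sq_nonneg _)
  have hchebN : m^2 * (ν Nn).toReal ≤ D2 := by
    refine cheb Nn hNm _ fun x hx => ?_
    have hxu : u x < 0 := hx
    nlinarith
  have hNu : ∫ x in Nn, (u x)^2 ∂ν ≤ D2 := by
    calc ∫ x in Nn, (u x)^2 ∂ν ≤ ∫ x in Nn, (u x - m)^2 ∂ν := by
          refine setIntegral_mono_on hu2.integrableOn hvint.integrableOn hNm ?_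
          intro x hx
          have hxu : u x < 0 := hx
          nlinarith
      _ ≤ D2 := setIntegral_le_integral hvint (Filter.Eventually.of_forall fun x => sq_nonneg _)
  set q : ℝ := m ^ ((1:ℝ)/l - 2) with hqdef
  have hq : 0 < q := Real.rpow_pos_of_pos hm _
  have hsplitm : m ^ ((1:ℝ)/l) = q * m^2 := by
    rw [hqdef, ← Real.rpow_two, ← Real.rpow_add hm]
    norm_num
  -- bound on ∫_N w
  have hNw : ∫ x in Nn, w x ∂ν ≤ 2 * q * D2 := by
    have hpt : ∀ x ∈ Nn, w x ≤ m ^ ((1:ℝ)/l) + q * (u x)^2 := by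
      intro x hx
      have hxu : u x < 0 := hx
      have ha : (0:ℝ) < |u x| := abs_pos.2 (ne_of_lt hxu)
      rcases le_or_gt (|u x|) m with hcase | hcase
      · have h1 : w x ≤ m ^ ((1:ℝ)/l) := Real.rpow_le_rpow (abs_nonneg _) hcase hil
        have h2 : 0 ≤ q * (u x)^2 := by positivity
        linarith
      · have h1 : |u x| ^ ((1:ℝ)/l) = |u x| ^ ((1:ℝ)/l - 2) * |u x| ^ (2:ℝ) := by
          rw [← Real.rpow_add ha]; norm_num
        have h2 : |u x| ^ ((1:ℝ)/l - 2) ≤ q := by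
          exact Real.rpow_le_rpow_of_nonpos hm hcase.le (by linarith)
        have h3 : |u x| ^ (2:ℝ) = (u x)^2 := by
          rw [Real.rpow_two]; rw [sq_abs]
        have h4 : w x = |u x| ^ ((1:ℝ)/l - 2) * (u x)^2 := by
          rw [hwdef]; dsimp only; rw [h1, h3]
        rw [h4]
        have h5 : 0 ≤ (u x)^2 := sq_nonneg _
        have h6 : (0:ℝ) ≤ m ^ ((1:ℝ)/l) := (Real.rpow_pos_of_pos hm _).le
        nlinarith [mul_le_mul_of_nonneg_right h2 h5]
    calc ∫ x in Nn, w x ∂ν ≤ ∫ x in Nn, (m ^ ((1:ℝ)/l) + q * (u x)^2) ∂ν := by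
          refine setIntegral_mono_on hwint.integrableOn ?_ hNm hpt
          exact (integrableOn_const (measure_ne_top ν Nn)).add
            ((hu2.const_mul q).integrableOn)
      _ = m ^ ((1:ℝ)/l) * (ν Nn).toReal + q * ∫ x in Nn, (u x)^2 ∂ν := by
          rw [integral_add (integrableOn_const (measure_ne_top ν Nn) : IntegrableOn (fun _ => m ^ ((1:ℝ)/l)) Nn ν)
            ((hu2.const_mul q).integrableOn), setIntegral_const, measureReal_def, integral_const_mul]
          ring_nf
      _ ≤ q * D2 + q * D2 := by
          have e1 : m ^ ((1:ℝ)/l) * (ν Nn).toReal = q * (m^2 * (ν Nn).toReal) := by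
            rw [hsplitm]; ring
          have e2 : q * (m^2 * (ν Nn).toReal) ≤ q * D2 :=
            mul_le_mul_of_nonneg_left hchebN hq.le
          have e3 : q * ∫ x in Nn, (u x)^2 ∂ν ≤ q * D2 :=
            mul_le_mul_of_nonneg_left hNu hq.le
          rw [e1]; linarith
      _ = 2 * q * D2 := by ring
  -- bound on measure of A
  set B : Set α := {x | u x < m/2} with hBdef
  have hBm : MeasurableSet B := measurableSet_lt hu measurable_const
  have hchebB : m^2/4 * (ν B).toReal ≤ D2 := by
    refine cheb B hBm _ fun x hx => ?_
    have hxu : u x < m/2 := hx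
    nlinarith
  have hBA : Bᶜ = {x | m/2 ≤ u x} := by
    ext x; simp only [hBdef, Set.mem_compl_iff, Set.mem_setOf_eq, not_lt]
  have hAm : MeasurableSet Bᶜ := hBm.compl
  have hAsubP : Bᶜ ⊆ P := by
    intro x hx
    rw [hBA] at hx
    have : m/2 ≤ u x := hx
    show (0:ℝ) < u x
    linarith
  have hA1 : (m/2) ^ ((1:ℝ)/l) * (ν Bᶜ).toReal ≤ ∫ x in P, w x ∂ν := by
    calc (m/2) ^ ((1:ℝ)/l) * (ν Bᶜ).toReal = ∫ _ in Bᶜ, (m/2) ^ ((1:ℝ)/l) ∂ν := by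
          rw [setIntegral_const, smul_eq_mul, measureReal_def]; ring
      _ ≤ ∫ x in Bᶜ, w x ∂ν := by
          refine setIntegral_mono_on (integrableOn_const (measure_ne_top ν _))
            hwint.integrableOn hAm ?_
          intro x hx
          rw [hBA] at hx
          have h1 : m/2 ≤ u x := hx
          have h2 : m/2 ≤ |u x| := le_trans h1 (le_abs_self _)
          exact Real.rpow_le_rpow (by linarith) h2 hil
      _ ≤ ∫ x in P, w x ∂ν := by
          refine setIntegral_mono_set hwint.integrableOn
            (Filter.Eventually.of_forall fun x => hwnn x) ?_
          exact Filter.Eventually.of_forall hAsubP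
  -- (m/2)^(1/l) ≥ q * m^2 / 4
  have hhalf : q * m^2 / 4 ≤ (m/2) ^ ((1:ℝ)/l) := by
    have e1 : (m/2 : ℝ) = m * (1/2) := by ring
    have e2 : ((m/2 : ℝ)) ^ ((1:ℝ)/l) = m ^ ((1:ℝ)/l) * (1/2 : ℝ) ^ ((1:ℝ)/l) := by
      rw [e1, Real.mul_rpow hm.le (by norm_num)]
    have e3 : ((1:ℝ)/4) ≤ (1/2 : ℝ) ^ ((1:ℝ)/l) := by
      have := Real.rpow_le_rpow_of_exponent_ge (by norm_num : (0:ℝ) < 1/2)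
        (by norm_num : (1/2:ℝ) ≤ 1) hil2
      have h4 : ((1:ℝ)/2) ^ (2:ℝ) = 1/4 := by
        rw [show (2:ℝ) = ((2:ℕ):ℝ) by norm_num, Real.rpow_natCast]; norm_num
      rw [h4] at this
      exact this
    have hmpos : (0:ℝ) ≤ m ^ ((1:ℝ)/l) := (Real.rpow_pos_of_pos hm _).le
    calc q * m^2 / 4 = m ^ ((1:ℝ)/l) * (1/4) := by rw [hsplitm]; ring
      _ ≤ m ^ ((1:ℝ)/l) * ((1/2:ℝ) ^ ((1:ℝ)/l)) := mul_le_mul_of_nonneg_left e3 hmpos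
      _ = (m/2) ^ ((1:ℝ)/l) := e2.symm
  -- combine: m^2 * ν(Bᶜ) ≤ 8 (C₁/C₀) D2
  have hK0 : (0:ℝ) ≤ C₁/C₀ := by positivity
  have hAbound : m^2 * (ν Bᶜ).toReal ≤ 8 * (C₁/C₀) * D2 := by
    have c1 : q * m^2 / 4 * (ν Bᶜ).toReal ≤ (C₁/C₀) * (2 * q * D2) := by
      calc q * m^2 / 4 * (ν Bᶜ).toReal
          ≤ (m/2) ^ ((1:ℝ)/l) * (ν Bᶜ).toReal :=
            mul_le_mul_of_nonneg_right hhalf ENNReal.toReal_nonneg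
        _ ≤ ∫ x in P, w x ∂ν := hA1
        _ ≤ (C₁/C₀) * ∫ x in Nn, w x ∂ν := hPw
        _ ≤ (C₁/C₀) * (2 * q * D2) := mul_le_mul_of_nonneg_left hNw hK0
    have c2 : q * (m^2 * (ν Bᶜ).toReal) ≤ q * (8 * (C₁/C₀) * D2) := by
      calc q * (m^2 * (ν Bᶜ).toReal) = 4 * (q * m^2 / 4 * (ν Bᶜ).toReal) := by ring
        _ ≤ 4 * ((C₁/C₀) * (2 * q * D2)) := by linarith
        _ = q * (8 * (C₁/C₀) * D2) := by ring
    exact le_of_mul_le_mul_left c2 hq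
  -- total measure decomposition
  have htot : (ν Set.univ).toReal = (ν B).toReal + (ν Bᶜ).toReal := by
    rw [← measure_add_measure_compl hBm, ENNReal.toReal_add (measure_ne_top _ _)
      (measure_ne_top _ _)]
  rw [htot]
  have hBbd : m^2 * (ν B).toReal ≤ 4 * D2 := by linarith
  calc m^2 * ((ν B).toReal + (ν Bᶜ).toReal)
      = m^2 * (ν B).toReal + m^2 * (ν Bᶜ).toReal := by ring
    _ ≤ 4 * D2 + 8 * (C₁/C₀) * D2 := by linarith
    _ = (8 * (C₁/C₀) + 4) * D2 := by ring

lemma lp2_eq_sqrt {N : ℕ} (Ω : Set (EuclideanSpace ℝ (Fin N)))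
    (f : EuclideanSpace ℝ (Fin N) → ℝ) :
    lpNormOn Ω 2 f = Real.sqrt (∫ x in Ω, (f x)^2) := by
  rw [lpNormOn, Real.sqrt_eq_rpow]
  have h : (fun x => |f x| ^ (2:ℝ)) = fun x => (f x)^2 := by
    funext x
    rw [show ((2:ℝ)) = ((2:ℕ):ℝ) by norm_num, Real.rpow_natCast, sq_abs]
  rw [show (∫ x in Ω, |f x| ^ (2:ℝ)) = ∫ x in Ω, (f x)^2 by rw [h]]

theorem nonlinear_Poincare_inequality {N : ℕ}
    (Ω : Set (EuclideanSpace ℝ (Fin N))) (hΩmeas : MeasurableSet Ω)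
    (hΩpos : 0 < volume Ω) (hΩfin : volume Ω < ⊤)
    (CP : ℝ) (hCP : 0 < CP)
    (hPoincare : ∀ f : EuclideanSpace ℝ (Fin N) → ℝ, MemH1On Ω f →
      lpNormOn Ω 2 (fun x => f x - meanOn Ω f) ≤ CP * gradNormOn Ω f)
    (C₀ C₁ : ℝ) (hC₀ : 0 < C₀) (hC₀₁ : C₀ ≤ C₁)
    (Φ : ℝ → ℝ → ℝ)
    (hΦcont : ∀ l : ℝ, 1 / 2 ≤ l → Continuous (Φ l))
    (hΦlow : ∀ l : ℝ, 1 / 2 ≤ l → ∀ y : ℝ, (C₀ * |y|) ^ l ≤ |Φ l y|)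
    (hΦup : ∀ l : ℝ, 1 / 2 ≤ l → ∀ y : ℝ, |Φ l y| ≤ (C₁ * |y|) ^ l)
    (hΦsign : ∀ l : ℝ, 1 / 2 ≤ l → ∀ y : ℝ, y ≠ 0 → 0 < y * Φ l y) :
    ∃ CPs : ℝ, 0 < CPs ∧
      ∀ l : ℝ, 1 / 2 ≤ l → ∀ ξ : EuclideanSpace ℝ (Fin N) → ℝ,
        IntegrableOn ξ Ω volume → (∫ x in Ω, ξ x) = 0 →
        MemH1On Ω (fun x => Φ l (ξ x)) →
        lpNormOn Ω 2 (fun x => Φ l (ξ x)) ≤ CPs * gradNormOn Ω (fun x => Φ l (ξ x)) := by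
  have hC₁ : 0 < C₁ := lt_of_lt_of_le hC₀ hC₀₁
  set K : ℝ := C₁ / C₀ with hKdef
  have hK0 : 0 < K := by positivity
  refine ⟨CP * (3 + 3 * K), by positivity, ?_⟩
  intro l hl ξ hξi hξ0 hH1
  have hl0 : 0 < l := lt_of_lt_of_le (by norm_num) hl
  have hil : (0:ℝ) ≤ 1/l := by positivity
  set ν : Measure (EuclideanSpace ℝ (Fin N)) := volume.restrict Ω with hνdef
  haveI : IsFiniteMeasure ν := ⟨by rw [hνdef, Measure.restrict_apply_univ]; exact hΩfin⟩
  set u : EuclideanSpace ℝ (Fin N) → ℝ := fun x => Φ l (ξ x) with hudef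
  have hu : Measurable u := (hH1.1).continuous.measurable
  have hu1 : Integrable u ν := hH1.2.1
  have hu2 : Integrable (fun x => u x ^ 2) ν := by
    have h := hH1.2.2.1
    have heq : (fun x => (Φ l (ξ x)) ^ (2:ℝ)) = fun x => u x ^ 2 := by
      funext x
      rw [show ((2:ℝ)) = ((2:ℕ):ℝ) by norm_num, Real.rpow_natCast]
    rw [heq] at h
    exact h
  have hξ : Integrable ξ ν := hξi
  have hξ0' : ∫ x, ξ x ∂ν = 0 := hξ0
  have hsign : ∀ x, 0 ≤ ξ x * u x := by
    intro x
    rcases eq_or_ne (ξ x) 0 with h | h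
    · rw [h]; simp
    · exact (hΦsign l hl (ξ x) h).le
  have hw1 : ∀ x, C₀ * |ξ x| ≤ |u x| ^ (1/l : ℝ) := by
    intro x
    have h := hΦlow l hl (ξ x)
    have h2 := Real.rpow_le_rpow (by positivity) h hil
    rwa [← Real.rpow_mul (by positivity), mul_one_div_cancel (ne_of_gt hl0),
      Real.rpow_one] at h2
  have hw2 : ∀ x, |u x| ^ (1/l : ℝ) ≤ C₁ * |ξ x| := by
    intro x
    have h := hΦup l hl (ξ x)
    have h2 := Real.rpow_le_rpow (abs_nonneg _) h hil
    rwa [← Real.rpow_mul (by positivity), mul_one_div_cancel (ne_of_gt hl0),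
      Real.rpow_one] at h2
  set T : ℝ := (volume Ω).toReal with hTdef
  have hT : 0 < T := ENNReal.toReal_pos (ne_of_gt hΩpos) (ne_of_lt hΩfin)
  set m : ℝ := meanOn Ω u with hmdef
  have hmean : ∫ x, u x ∂ν = m * T := by
    rw [hmdef, meanOn, ← hTdef]
    rw [div_mul_cancel₀ _ hT.ne']
  have hνuniv : (ν Set.univ).toReal = T := by
    rw [hνdef, Measure.restrict_apply_univ, hTdef]
  have hvint : Integrable (fun x => (u x - m)^2) ν := by
    have heq : (fun x => (u x - m)^2) = fun x => (u x ^ 2 - (2*m) * u x) + m^2 := by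
      funext x; ring
    rw [heq]
    exact (hu2.sub (hu1.const_mul _)).add (integrable_const _)
  set D2 : ℝ := ∫ x, (u x - m)^2 ∂ν with hD2def
  have hD2nn : 0 ≤ D2 := integral_nonneg fun x => sq_nonneg _
  have hkey : m^2 * T ≤ (8 * K + 4) * D2 := by
    rcases lt_trichotomy m 0 with hm | hm | hm
    · have h := nlp_aux ν C₀ C₁ l (-m) hC₀ hC₁ hl (by linarith)
        (fun x => -(u x)) (fun x => -(ξ x)) hu.neg hu1.neg
        (by simpa [neg_sq] using hu2) hξ.neg
        (by rw [integral_neg, hξ0', neg_zero])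
        (fun x => by simpa [neg_mul_neg] using hsign x)
        (fun x => by simpa [abs_neg] using hw1 x)
        (fun x => by simpa [abs_neg] using hw2 x)
      have heq : (fun x => (-(u x) - -m)^2) = fun x => (u x - m)^2 := by
        funext x; ring
      rw [heq, hνuniv] at h
      calc m^2 * T = (-m)^2 * T := by ring
        _ ≤ (8 * (C₁/C₀) + 4) * D2 := h
        _ = (8 * K + 4) * D2 := by rw [hKdef]
    · rw [hm]
      have : (0:ℝ) ≤ (8 * K + 4) * D2 := by positivity
      linarith
    · have h := nlp_aux ν C₀ C₁ l m hC₀ hC₁ hl hm u ξ hu hu1 hu2 hξ hξ0'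
        hsign hw1 hw2
      rw [hνuniv] at h
      calc m^2 * T ≤ (8 * (C₁/C₀) + 4) * D2 := h
        _ = (8 * K + 4) * D2 := by rw [hKdef]
  have hX : ∫ x, u x ^ 2 ∂ν = D2 + m^2 * T := by
    have h1 : Integrable (fun x => (u x - m)^2 + (2*m) * u x) ν :=
      hvint.add (hu1.const_mul _)
    have e1 : ∫ x, u x ^ 2 ∂ν = ∫ x, (((u x - m)^2 + (2*m) * u x) - m^2) ∂ν := by
      congr 1; funext x; ring
    have e2 : ∫ x, (((u x - m)^2 + (2*m) * u x) - m^2) ∂ν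
        = (∫ x, ((u x - m)^2 + (2*m) * u x) ∂ν) - ∫ _, (m^2 : ℝ) ∂ν :=
      integral_sub h1 (integrable_const _)
    have e3 : ∫ x, ((u x - m)^2 + (2*m) * u x) ∂ν
        = D2 + ∫ x, (2*m) * u x ∂ν := integral_add hvint (hu1.const_mul _)
    have e4 : ∫ x, (2*m) * u x ∂ν = (2*m) * ∫ x, u x ∂ν := integral_const_mul _ _
    have e5 : ∫ _, (m^2 : ℝ) ∂ν = m^2 * T := by
      rw [integral_const, measureReal_def, hνuniv, smul_eq_mul, mul_comm]
    rw [e1, e2, e3, e4, e5, hmean]; ring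
  -- conclusion
  have hlp1 : lpNormOn Ω 2 u = Real.sqrt (∫ x, u x ^ 2 ∂ν) := lp2_eq_sqrt Ω u
  have hlp2 : lpNormOn Ω 2 (fun x => u x - m) = Real.sqrt D2 := by
    rw [lp2_eq_sqrt]
  have hPoin := hPoincare u hH1
  rw [← hmdef] at hPoin
  have hPoin' : Real.sqrt D2 ≤ CP * gradNormOn Ω u := by
    rw [← hlp2]
    exact hPoin
  have hG : 0 ≤ gradNormOn Ω u := by
    rw [gradNormOn]
    positivity
  have hXle : ∫ x, u x ^ 2 ∂ν ≤ (3 + 3*K)^2 * D2 := by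
    rw [hX]
    nlinarith [hkey, mul_nonneg (mul_nonneg hK0.le hK0.le) hD2nn, mul_nonneg hK0.le hD2nn, hD2nn]
  calc lpNormOn Ω 2 u = Real.sqrt (∫ x, u x ^ 2 ∂ν) := hlp1
    _ ≤ Real.sqrt ((3 + 3*K)^2 * D2) := Real.sqrt_le_sqrt hXle
    _ = (3 + 3*K) * Real.sqrt D2 := by
        rw [Real.sqrt_mul (sq_nonneg _), Real.sqrt_sq (by positivity : (0:ℝ) ≤ 3 + 3*K)]
    _ ≤ (3 + 3*K) * (CP * gradNormOn Ω u) :=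
        mul_le_mul_of_nonneg_left hPoin' (by positivity)
    _ = CP * (3 + 3*K) * gradNormOn Ω u := by ring
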